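/- Let K be a subcategory of a category L and let u be a weak Fraïssé sequence in K having a colimit U in L. Then Odd has a winning strategy in the Banach–Mazur game BM(K, U): there is a strategy for Odd such that every play in which Odd follows it results in a sequence that has a colimit in L isomorphic to U. -/

import Mathlib

open CategoryTheory CategoryTheory.Limits

universe v u v' u'

variable {C : Type u} [Category.{v} C]

/-- A weak Fraïssé sequence: (G1) and (G2). -/
def IsWeakFraisseSeq (u : ℕ ⥤ C) : Prop :=
  (∀ x : C, ∃ n : ℕ, Nonempty (x ⟶ u.obj n)) ∧
  (∀ n : ℕ, ∃ (m : ℕ) (hnm : n ≤ m), ∀ ⦃y : C⦄ (f : u.obj m ⟶ y),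
    ∃ (k : ℕ) (hmk : m ≤ k) (g : y ⟶ u.obj k),
      u.map (homOfLE hnm) ≫ f ≫ g = u.map (homOfLE (hnm.trans hmk)))

/-- The restriction of a sequence to its first `n + 1` terms. -/
def restrictSeq (a : ℕ ⥤ C) (n : ℕ) : ComposableArrows C n :=
  (Fin.val_strictMono (n := n + 1)).monotone.functor ⋙ a

/-- A strategy for Odd in the Banach–Mazur game on `C`: a response (an arrow out of
the last object) to every position ending with Eve's move. -/
def OddStrat (C : Type u) [Category.{v} C] : Type (max u v) :=
  ∀ (n : ℕ) (p : ComposableArrows C (2 * n)),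
    Σ b : C, (p.obj ⟨2 * n, Nat.lt_succ_self _⟩ ⟶ b)

/-- The play `a` follows Odd's strategy `σ`. -/
def FollowsOdd (σ : OddStrat C) (a : ℕ ⥤ C) : Prop :=
  ∀ n : ℕ, ∃ h : a.obj (2 * n + 1) = (σ n (restrictSeq a (2 * n))).1,
    a.map (homOfLE (Nat.le_succ (2 * n))) =
      (σ n (restrictSeq a (2 * n))).2 ≫ eqToHom h.symm

section
variable {L : Type u'} [Category.{v'} L] (ι : C ⥤ L)

/-- Odd wins the play `a` of the Banach–Mazur game `BM(C, V)` (with colimits taken in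
`L` along the inclusion `ι`): the resulting sequence has a colimit in `L` isomorphic
to `V`. -/
def OddWinsPlay (V : L) (a : ℕ ⥤ C) : Prop :=
  ∃ d : Cocone (a ⋙ ι), Nonempty (IsColimit d) ∧ Nonempty (d.pt ≅ V)

/-- `σ` is a winning strategy for Odd in `BM(C, V)`. -/
def OddWinning (V : L) (σ : OddStrat C) : Prop :=
  ∀ a : ℕ ⥤ C, FollowsOdd σ a → OddWinsPlay ι V a

end


namespace OddWF

lemma nat_hom_eq {x y : ℕ} (f g : x ⟶ y) : f = g := Subsingleton.elim f g

lemma map_split {D : Type u'} [Category.{v'} D] (F : ℕ ⥤ D) {x y z : ℕ}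
    (hxy : x ≤ y) (hyz : y ≤ z) (hxz : x ≤ z) :
    F.map (homOfLE hxz) = F.map (homOfLE hxy) ≫ F.map (homOfLE hyz) := by
  rw [← F.map_comp]; exact congrArg F.map (nat_hom_eq _ _)

section Strat

variable {K : Type u} [Category.{v} K] (u : ℕ ⥤ K) (hu : IsWeakFraisseSeq u)

noncomputable abbrev M (n : ℕ) : ℕ := (hu.2 n).choose

lemma le_M (n : ℕ) : n ≤ M u hu n := (hu.2 n).choose_spec.choose

noncomputable def Kk (n : ℕ) {y : K} (f : u.obj (M u hu n) ⟶ y) : ℕ :=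
  max ((hu.2 n).choose_spec.choose_spec f).choose (M u hu n + 1)

lemma lt_Kk (n : ℕ) {y : K} (f : u.obj (M u hu n) ⟶ y) : n < Kk u hu n f :=
  lt_of_le_of_lt (le_M u hu n) (lt_of_lt_of_le (Nat.lt_succ_self _) (le_max_right _ _))

lemma le_Kk (n : ℕ) {y : K} (f : u.obj (M u hu n) ⟶ y) : n ≤ Kk u hu n f :=
  (lt_Kk u hu n f).le

noncomputable def g (n : ℕ) {y : K} (f : u.obj (M u hu n) ⟶ y) : y ⟶ u.obj (Kk u hu n f) :=
  ((hu.2 n).choose_spec.choose_spec f).choose_spec.choose_spec.choose ≫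
    u.map (homOfLE (le_max_left _ _))

lemma g_spec (n : ℕ) {y : K} (f : u.obj (M u hu n) ⟶ y) :
    u.map (homOfLE (le_M u hu n)) ≫ f ≫ g u hu n f = u.map (homOfLE (le_Kk u hu n f)) := by
  have h := ((hu.2 n).choose_spec.choose_spec f).choose_spec.choose_spec.choose_spec
  rw [show homOfLE (le_M u hu n) = homOfLE ((hu.2 n).choose_spec.choose) from rfl]
  rw [g]; simp only [← Category.assoc] at h ⊢; rw [h, ← u.map_comp]
  exact congrArg u.map (nat_hom_eq _ _)

def res {i : ℕ} (p : ComposableArrows K (2 * (i + 1))) : ComposableArrows K (2 * i) :=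
  (show Monotone (fun x : Fin (2 * i + 1) => (⟨x.1, by omega⟩ : Fin (2 * (i + 1) + 1))) from
    fun _ _ h => h).functor ⋙ p

open scoped Classical in
noncomputable def T : (i : ℕ) → (p : ComposableArrows K (2 * i)) →
    Σ n : ℕ, (p.obj ⟨2 * i, Nat.lt_succ_self _⟩ ⟶ u.obj (M u hu n))
  | 0, p =>
    ⟨(hu.1 (p.obj ⟨0, Nat.lt_succ_self _⟩)).choose,
      (hu.1 (p.obj ⟨0, Nat.lt_succ_self _⟩)).choose_spec.some ≫
        u.map (homOfLE (le_M u hu _))⟩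
  | (i + 1), p =>
    if h : p.obj ⟨2 * i + 1, by omega⟩ = u.obj (M u hu (T i (res p)).1) then
      ⟨Kk u hu (T i (res p)).1
          (eqToHom h.symm ≫ p.map (homOfLE (show (⟨2 * i + 1, by omega⟩ : Fin (2 * (i + 1) + 1)) ≤ ⟨2 * (i + 1), Nat.lt_succ_self _⟩ by simp [Fin.mk_le_mk]))),
        g u hu (T i (res p)).1 _ ≫ u.map (homOfLE (le_M u hu _))⟩
    else
      ⟨(hu.1 (p.obj ⟨2 * (i + 1), Nat.lt_succ_self _⟩)).choose,
        (hu.1 (p.obj ⟨2 * (i + 1), Nat.lt_succ_self _⟩)).choose_spec.some ≫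
          u.map (homOfLE (le_M u hu _))⟩

end Strat
end OddWF

namespace OddWF2

lemma nat_hom_eq {x y : ℕ} (f g : x ⟶ y) : f = g := Subsingleton.elim f g

lemma map_split {D : Type u'} [Category.{v'} D] (F : ℕ ⥤ D) {x y z : ℕ}
    (hxy : x ≤ y) (hyz : y ≤ z) (hxz : x ≤ z) :
    F.map (homOfLE hxz) = F.map (homOfLE hxy) ≫ F.map (homOfLE hyz) := by
  rw [← F.map_comp]; exact congrArg F.map (nat_hom_eq _ _)

section Interleave

variable {K : Type u} [Category.{v} K] {L : Type u'} [Category.{v'} L]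

/-- Cocone over an ℕ-indexed functor from successor data. -/
abbrev seqCocone (F : ℕ ⥤ L) (X : L) (app : ∀ n, F.obj n ⟶ X)
    (w : ∀ n, F.map (homOfLE (Nat.le_succ n)) ≫ app (n + 1) = app n) : Cocone F where
  pt := X
  ι := NatTrans.ofSequence (F := F) (G := (Functor.const ℕ).obj X) app (by
    intro n
    simpa using w n)

@[simp] lemma seqCocone_app (F : ℕ ⥤ L) (X : L) (app : ∀ n, F.obj n ⟶ X) (w) (j : ℕ) :
    (seqCocone F X app w).ι.app j = app j := rfl

theorem interleave (ι : K ⥤ L) (u a : ℕ ⥤ K) (c : Cocone (u ⋙ ι)) (hc : IsColimit c)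
    (n : ℕ → ℕ) (hle : ∀ i, i ≤ n i) (hmono : ∀ i, n i ≤ n (i + 1))
    (φ : ∀ i, u.obj (n i) ⟶ a.obj (2 * i + 1))
    (ψ : ∀ i, a.obj (2 * i + 2) ⟶ u.obj (n (i + 1)))
    (tri1 : ∀ i, φ i ≫ a.map (homOfLE (Nat.le_succ (2 * i + 1))) ≫ ψ i
      = u.map (homOfLE (hmono i)))
    (tri2 : ∀ i, a.map (homOfLE (Nat.le_succ (2 * i + 2))) = ψ i ≫ φ (i + 1)) :
    ∃ d : Cocone (a ⋙ ι), Nonempty (IsColimit d) ∧ Nonempty (d.pt ≅ c.pt) := by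
  classical
  have nmono : Monotone n := monotone_nat_of_le_succ hmono
  -- step for E
  have H1 : ∀ i, (a ⋙ ι).map (homOfLE (show 2 * i + 2 ≤ 2 * (i + 1) + 2 by omega)) ≫
      ι.map (ψ (i + 1)) ≫ c.ι.app (n (i + 2)) = ι.map (ψ i) ≫ c.ι.app (n (i + 1)) := by
    intro i
    have e1 : (a ⋙ ι).map (homOfLE (show 2 * i + 2 ≤ 2 * (i + 1) + 2 by omega)) =
        ι.map ((ψ i ≫ φ (i + 1)) ≫ a.map (homOfLE (Nat.le_succ (2 * (i + 1) + 1)))) := by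
      show ι.map (a.map _) = _
      rw [← tri2 i, ← a.map_comp]
      exact congrArg ι.map (congrArg a.map (nat_hom_eq _ _))
    rw [e1]
    calc ι.map ((ψ i ≫ φ (i + 1)) ≫ a.map (homOfLE (Nat.le_succ (2 * (i + 1) + 1)))) ≫
          ι.map (ψ (i + 1)) ≫ c.ι.app (n (i + 2))
        = ι.map (ψ i) ≫
            ι.map (φ (i + 1) ≫ a.map (homOfLE (Nat.le_succ (2 * (i + 1) + 1))) ≫ ψ (i + 1)) ≫
            c.ι.app (n (i + 2)) := by
          simp only [Functor.map_comp, Category.assoc]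
      _ = ι.map (ψ i) ≫ (u ⋙ ι).map (homOfLE (hmono (i + 1))) ≫ c.ι.app (n (i + 2)) := by
          rw [tri1 (i + 1)]; rfl
      _ = ι.map (ψ i) ≫ c.ι.app (n (i + 1)) := by
          rw [c.w (homOfLE (hmono (i + 1)))]
  -- transitive version
  have H2 : ∀ i j (h : i ≤ j), (a ⋙ ι).map (homOfLE (show 2 * i + 2 ≤ 2 * j + 2 by omega)) ≫
      ι.map (ψ j) ≫ c.ι.app (n (j + 1)) = ι.map (ψ i) ≫ c.ι.app (n (i + 1)) := by
    intro i j h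
    induction h with
    | refl =>
        rw [show (homOfLE (show 2 * i + 2 ≤ 2 * i + 2 by omega)) = 𝟙 (2 * i + 2 : ℕ) from
          nat_hom_eq _ _]
        simp
    | @step m hm ih =>
        have hm' : i ≤ m := hm
        rw [map_split (a ⋙ ι) (show 2 * i + 2 ≤ 2 * m + 2 by omega)
          (show 2 * m + 2 ≤ 2 * (m + 1) + 2 by omega), Category.assoc, H1 m, ih]
  -- the candidate colimit cocone over `a ⋙ ι`
  have H3 : ∀ j, (a ⋙ ι).map (homOfLE (Nat.le_succ j)) ≫
      ((a ⋙ ι).map (homOfLE (show j + 1 ≤ 2 * (j + 1) + 2 by omega)) ≫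
        ι.map (ψ (j + 1)) ≫ c.ι.app (n (j + 2))) =
      (a ⋙ ι).map (homOfLE (show j ≤ 2 * j + 2 by omega)) ≫
        ι.map (ψ j) ≫ c.ι.app (n (j + 1)) := by
    intro j
    rw [← Category.assoc, ← Functor.map_comp,
      show (homOfLE (Nat.le_succ j) ≫ homOfLE (show j + 1 ≤ 2 * (j + 1) + 2 by omega)) =
        (homOfLE (show j ≤ 2 * j + 2 by omega) ≫
          homOfLE (show 2 * j + 2 ≤ 2 * (j + 1) + 2 by omega)) from nat_hom_eq _ _,
      Functor.map_comp, Category.assoc]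
    rw [H1 j]
  refine ⟨seqCocone (a ⋙ ι) c.pt
      (fun j => (a ⋙ ι).map (homOfLE (show j ≤ 2 * j + 2 by omega)) ≫
        ι.map (ψ j) ≫ c.ι.app (n (j + 1))) H3, ⟨?_⟩, ⟨Iso.refl _⟩⟩
  -- the `ζ`-step for an arbitrary cocone `s`
  have Z1 : ∀ (s : Cocone (a ⋙ ι)) i, (u ⋙ ι).map (homOfLE (hmono i)) ≫
      ι.map (φ (i + 1)) ≫ s.ι.app (2 * (i + 1) + 1) =
      ι.map (φ i) ≫ s.ι.app (2 * i + 1) := by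
    intro s i
    have e0 : u.map (homOfLE (hmono i)) ≫ φ (i + 1) =
        φ i ≫ a.map (homOfLE (show 2 * i + 1 ≤ 2 * (i + 1) + 1 by omega)) := by
      rw [← tri1 i, map_split a (Nat.le_succ (2 * i + 1)) (Nat.le_succ (2 * i + 2))
        (show 2 * i + 1 ≤ 2 * (i + 1) + 1 by omega), tri2 i]
      simp only [Category.assoc]
    have e1 : (u ⋙ ι).map (homOfLE (hmono i)) ≫ ι.map (φ (i + 1)) =
        ι.map (φ i) ≫ (a ⋙ ι).map (homOfLE (show 2 * i + 1 ≤ 2 * (i + 1) + 1 by omega)) := by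
      show ι.map (u.map _) ≫ ι.map _ = ι.map _ ≫ ι.map (a.map _)
      rw [← ι.map_comp, ← ι.map_comp, e0]
    rw [← Category.assoc, e1, Category.assoc, s.w]
  have Z2 : ∀ (s : Cocone (a ⋙ ι)) i j (h : i ≤ j),
      (u ⋙ ι).map (homOfLE (nmono h)) ≫ ι.map (φ j) ≫ s.ι.app (2 * j + 1) =
      ι.map (φ i) ≫ s.ι.app (2 * i + 1) := by
    intro s i j h
    induction h with
    | refl =>
        rw [show (homOfLE (nmono (le_refl i))) = 𝟙 (n i : ℕ) from nat_hom_eq _ _]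
        simp
    | @step m hm ih =>
        have hm' : i ≤ m := hm
        rw [map_split (u ⋙ ι) (nmono hm') (hmono m), Category.assoc, Z1 s m, ih]
  -- the comparison cocone over `u ⋙ ι`
  have estep : ∀ (s : Cocone (a ⋙ ι)) q, (u ⋙ ι).map (homOfLE (Nat.le_succ q)) ≫
      ((u ⋙ ι).map (homOfLE (hle (q + 1))) ≫ ι.map (φ (q + 1)) ≫ s.ι.app (2 * (q + 1) + 1)) =
      (u ⋙ ι).map (homOfLE (hle q)) ≫ ι.map (φ q) ≫ s.ι.app (2 * q + 1) := by
    intro s q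
    rw [← Category.assoc, ← Functor.map_comp,
      show (homOfLE (Nat.le_succ q) ≫ homOfLE (hle (q + 1))) =
        (homOfLE (hle q) ≫ homOfLE (hmono q)) from nat_hom_eq _ _,
      Functor.map_comp, Category.assoc]
    rw [Z1 s q]
  refine { desc := fun s => hc.desc (seqCocone (u ⋙ ι) s.pt
      (fun q => (u ⋙ ι).map (homOfLE (hle q)) ≫ ι.map (φ q) ≫ s.ι.app (2 * q + 1))
      (estep s)), fac := ?_, uniq := ?_ }
  · -- fac
    intro s j
    have facE : ∀ i, (ι.map (ψ i) ≫ c.ι.app (n (i + 1))) ≫ hc.desc (seqCocone (u ⋙ ι) s.pt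
        (fun q => (u ⋙ ι).map (homOfLE (hle q)) ≫ ι.map (φ q) ≫ s.ι.app (2 * q + 1))
        (estep s)) = s.ι.app (2 * i + 2) := by
      intro i
      rw [Category.assoc, hc.fac, seqCocone_app]
      have : (u ⋙ ι).map (homOfLE (hle (n (i + 1)))) ≫ ι.map (φ (n (i + 1))) ≫
          s.ι.app (2 * n (i + 1) + 1) = ι.map (φ (i + 1)) ≫ s.ι.app (2 * (i + 1) + 1) := by
        rw [show (homOfLE (hle (n (i + 1)))) = homOfLE (nmono (hle (i + 1))) from
          nat_hom_eq _ _]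
        exact Z2 s (i + 1) (n (i + 1)) (hle (i + 1))
      rw [this, ← Category.assoc, ← ι.map_comp, ← tri2 i]
      exact s.w (homOfLE (Nat.le_succ (2 * i + 2)))
    rw [seqCocone_app, Category.assoc, facE j]
    exact s.w (homOfLE (show j ≤ 2 * j + 2 by omega))
  · -- uniq
    intro s m hm
    have UA : ∀ i, c.ι.app (n i) ≫ m = ι.map (φ i) ≫ s.ι.app (2 * i + 1) := by
      intro i
      have e1 : c.ι.app (n i) =
          ι.map (φ i) ≫ (a ⋙ ι).map (homOfLE (Nat.le_succ (2 * i + 1))) ≫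
            ι.map (ψ i) ≫ c.ι.app (n (i + 1)) := by
        rw [← c.w (homOfLE (hmono i)), Functor.comp_map, ← tri1 i]
        simp only [Functor.map_comp, Category.assoc, Functor.comp_map]
      have e2 : (a ⋙ ι).map (homOfLE (Nat.le_succ (2 * i + 1))) ≫
          ι.map (ψ i) ≫ c.ι.app (n (i + 1)) =
          (a ⋙ ι).map (homOfLE (show 2 * i + 1 ≤ 2 * (2 * i + 1) + 2 by omega)) ≫
            ι.map (ψ (2 * i + 1)) ≫ c.ι.app (n (2 * i + 1 + 1)) := by
        rw [map_split (a ⋙ ι) (Nat.le_succ (2 * i + 1))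
          (show 2 * i + 2 ≤ 2 * (2 * i + 1) + 2 by omega), Category.assoc,
          H2 i (2 * i + 1) (by omega)]
      have hd : ((a ⋙ ι).map (homOfLE (show 2 * i + 1 ≤ 2 * (2 * i + 1) + 2 by omega)) ≫
          ι.map (ψ (2 * i + 1)) ≫ c.ι.app (n (2 * i + 1 + 1))) ≫ m = s.ι.app (2 * i + 1) :=
        hm (2 * i + 1)
      rw [e1, e2, Category.assoc, hd]
    refine hc.uniq (seqCocone (u ⋙ ι) s.pt
      (fun q => (u ⋙ ι).map (homOfLE (hle q)) ≫ ι.map (φ q) ≫ s.ι.app (2 * q + 1))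
      (estep s)) m ?_
    intro q
    rw [seqCocone_app, ← c.w (homOfLE (hle q)), Category.assoc, UA q]

end Interleave
end OddWF2

namespace OddWF

lemma sigma_snd_eq {K : Type u} [Category.{v} K] {α : Type} {X : K} {B : α → K}
    {p q : Σ n : α, (X ⟶ B n)} (h : p = q) (e : B q.1 = B p.1) : p.2 = q.2 ≫ eqToHom e := by
  subst h
  have he : e = rfl := rfl
  rw [he, eqToHom_refl, Category.comp_id]

lemma nat_square {K : Type u} [Category.{v} K] (u : ℕ ⥤ K) {x y x' y' : ℕ}
    (ex : x = x') (ey : y = y') (h : x ≤ y) (h' : x' ≤ y') :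
    u.map (homOfLE h) ≫ eqToHom (congrArg u.obj ey) =
      eqToHom (congrArg u.obj ex) ≫ u.map (homOfLE h') := by
  subst ex; subst ey
  rw [show congrArg u.obj (rfl : x = x) = rfl from rfl,
    show congrArg u.obj (rfl : y = y) = rfl from rfl, eqToHom_refl, eqToHom_refl,
    Category.comp_id, Category.id_comp]

end OddWF

/-- if `K` is a subcategory of `L` (the inclusion `ι` being faithful and
injective on objects) and `u` is a weak Fraïssé sequence in `K` having a colimit `U`
in `L`, then Odd has a winning strategy in the Banach–Mazur game `BM(K, U)`. -/
theorem odd_winning_of_weakFraisseSeq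
    {K : Type u} [Category.{v} K] {L : Type u'} [Category.{v'} L]
    (ι : K ⥤ L) (hfaith : ι.Faithful) (hinj : Function.Injective ι.obj)
    (u : ℕ ⥤ K) (hu : IsWeakFraisseSeq u)
    (c : Cocone (u ⋙ ι)) (hc : IsColimit c) :
    ∃ σ : OddStrat K, OddWinning ι c.pt σ := by
  classical
  refine ⟨fun i p => ⟨u.obj (OddWF.M u hu (OddWF.T u hu i p).1), (OddWF.T u hu i p).2⟩, ?_⟩
  intro a ha
  let nn : ℕ → ℕ := fun i => (OddWF.T u hu i (restrictSeq a (2 * i))).1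
  have h1 : ∀ i, a.obj (2 * i + 1) = u.obj (OddWF.M u hu (nn i)) := fun i => (ha i).choose
  have h2 : ∀ i, a.map (homOfLE (Nat.le_succ (2 * i))) =
      (OddWF.T u hu i (restrictSeq a (2 * i))).2 ≫ eqToHom (h1 i).symm :=
    fun i => (ha i).choose_spec
  let ff : ∀ i, u.obj (OddWF.M u hu (nn i)) ⟶ a.obj (2 * i + 2) :=
    fun i => eqToHom (h1 i).symm ≫ a.map (homOfLE (Nat.le_succ (2 * i + 1)))
  have hT : ∀ i, OddWF.T u hu (i + 1) (restrictSeq a (2 * (i + 1))) =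
      ⟨OddWF.Kk u hu (nn i) (ff i),
        OddWF.g u hu (nn i) (ff i) ≫ u.map (homOfLE (OddWF.le_M u hu _))⟩ := by
    intro i
    have hcond : (restrictSeq a (2 * (i + 1))).obj ⟨2 * i + 1, by omega⟩ =
        u.obj (OddWF.M u hu
          (OddWF.T u hu i (OddWF.res (restrictSeq a (2 * (i + 1))))).1) := h1 i
    rw [OddWF.T, dif_pos hcond]
    rfl
  have hnk : ∀ i, nn (i + 1) = OddWF.Kk u hu (nn i) (ff i) :=
    fun i => congrArg Sigma.fst (hT i)
  have hlt : ∀ i, nn i < nn (i + 1) := fun i => by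
    rw [hnk i]; exact OddWF.lt_Kk u hu _ _
  have hmono : ∀ i, nn i ≤ nn (i + 1) := fun i => (hlt i).le
  have hle : ∀ i, i ≤ nn i := by
    intro i
    induction i with
    | zero => exact Nat.zero_le _
    | succ k ihk => exact Nat.succ_le_of_lt (lt_of_le_of_lt ihk (hlt k))
  have hsnd : ∀ i, (OddWF.T u hu (i + 1) (restrictSeq a (2 * (i + 1)))).2 =
      (OddWF.g u hu (nn i) (ff i) ≫ u.map (homOfLE (OddWF.le_M u hu _))) ≫
        eqToHom (congrArg u.obj (congrArg (OddWF.M u hu) (hnk i).symm)) :=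
    fun i => OddWF.sigma_snd_eq (hT i) _
  -- the interleaving data
  have tri1 : ∀ i, (u.map (homOfLE (OddWF.le_M u hu (nn i))) ≫ eqToHom (h1 i).symm) ≫
      a.map (homOfLE (Nat.le_succ (2 * i + 1))) ≫
      (OddWF.g u hu (nn i) (ff i) ≫ eqToHom (congrArg u.obj (hnk i).symm)) =
      u.map (homOfLE (hmono i)) := by
    intro i
    calc (u.map (homOfLE (OddWF.le_M u hu (nn i))) ≫ eqToHom (h1 i).symm) ≫
        a.map (homOfLE (Nat.le_succ (2 * i + 1))) ≫
        (OddWF.g u hu (nn i) (ff i) ≫ eqToHom (congrArg u.obj (hnk i).symm))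
        = u.map (homOfLE (OddWF.le_M u hu (nn i))) ≫ ff i ≫
            OddWF.g u hu (nn i) (ff i) ≫ eqToHom (congrArg u.obj (hnk i).symm) := by
          show _ = u.map _ ≫ (eqToHom (h1 i).symm ≫ a.map (homOfLE (Nat.le_succ (2 * i + 1)))) ≫ _
          simp only [Category.assoc]
      _ = u.map (homOfLE (OddWF.le_Kk u hu (nn i) (ff i))) ≫
            eqToHom (congrArg u.obj (hnk i).symm) := by
          rw [reassoc_of% (OddWF.g_spec u hu (nn i) (ff i))]
      _ = u.map (homOfLE (hmono i)) :=
          OddWF.nat_square u (rfl : nn i = nn i) (hnk i).symm _ _ |>.trans (by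
            rw [show congrArg u.obj (rfl : nn i = nn i) = rfl from rfl, eqToHom_refl,
              Category.id_comp])
  have tri2 : ∀ i, a.map (homOfLE (Nat.le_succ (2 * i + 2))) =
      (OddWF.g u hu (nn i) (ff i) ≫ eqToHom (congrArg u.obj (hnk i).symm)) ≫
      (u.map (homOfLE (OddWF.le_M u hu (nn (i + 1)))) ≫ eqToHom (h1 (i + 1)).symm) := by
    intro i
    have start : a.map (homOfLE (Nat.le_succ (2 * i + 2))) =
        (OddWF.T u hu (i + 1) (restrictSeq a (2 * (i + 1)))).2 ≫ eqToHom (h1 (i + 1)).symm :=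
      h2 (i + 1)
    rw [start, hsnd i]
    simp only [Category.assoc]
    rw [(OddWF.nat_square u (hnk i).symm
      (congrArg (OddWF.M u hu) (hnk i).symm) (OddWF.le_M u hu (OddWF.Kk u hu (nn i) (ff i)))
      (OddWF.le_M u hu (nn (i + 1))))]
    exact (Category.assoc _ _ _).trans (congrArg _ (Category.assoc _ _ _))
  exact OddWF2.interleave ι u a c hc nn hle hmono
    (fun i => u.map (homOfLE (OddWF.le_M u hu (nn i))) ≫ eqToHom (h1 i).symm)
    (fun i => OddWF.g u hu (nn i) (ff i) ≫ eqToHom (congrArg u.obj (hnk i).symm))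
    tri1 tri2
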